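/- Let C₀ ⊆ F_q^d be a linear code whose minimum distance is greater than δ₀·d (equivalently, C₀ can recover from any δ₀·d erasures), and let H be a d-regular graph on n vertices with normalized second eigenvalue at most λ. Let k > 0 be a real number with λ < δ₀ − 2/k. Then for any choice of edge orderings, any two codewords of the Tanner code C(H, C₀) that agree on all but at most (δ₀/k)·(nd/2) edges of H are equal; in other words, the Tanner code can be recovered from any (δ₀/k) fraction of erasures. -/

import Mathlib

/-- A code `C ⊆ Fⁿ` (here indexed by a finite type `ι`, over a finite alphabet `F`) is
`(α, ℓ, L)`-list recoverable from erasures: for every family of sets `S i ⊆ F` such that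
there is a set `T` with `|T| ≥ α·|ι|`, `|S i| ≤ ℓ` for `i ∈ T` and `S i = F` for `i ∉ T`,
there are at most `L` codewords `c ∈ C` with `c i ∈ S i` for all `i`. -/
def ListRecoverableErasures {ι F : Type*} [Fintype ι] [Fintype F]
    (C : Set (ι → F)) (α : ℝ) (ℓ L : ℕ) : Prop :=
  ∀ (S : ι → Finset F) (T : Finset ι),
    α * (Fintype.card ι : ℝ) ≤ (T.card : ℝ) →
    (∀ i ∈ T, (S i).card ≤ ℓ) →
    (∀ i ∉ T, S i = Finset.univ) →
    {c ∈ C | ∀ i, c i ∈ S i}.ncard ≤ L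

/-- A `d`-regular graph `G` on `n` vertices has normalized second eigenvalue at most `lam`:
for every vector `x` summing to `0`, `‖Ax‖₂ ≤ lam · d · ‖x‖₂`. -/
def NormSecondEigenvalueLE {n : ℕ} (G : SimpleGraph (Fin n)) [DecidableRel G.Adj]
    (d : ℕ) (lam : ℝ) : Prop :=
  ∀ x : Fin n → ℝ, (∑ v, x v = 0) →
    Real.sqrt (∑ v, ((G.adjMatrix ℝ).mulVec x v) ^ 2) ≤
      lam * d * Real.sqrt (∑ v, (x v) ^ 2)

/-- The edge of `G` at `v` towards the neighbor `u`, as an element of the edge set. -/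
def edgeAt {n : ℕ} (G : SimpleGraph (Fin n)) (v : Fin n) (u : G.neighborSet v) :
    G.edgeSet := ⟨s(v, (u : Fin n)), u.2⟩

/-- The local codeword of `x` at vertex `v`, read off via the edge ordering `ord`. -/
def localWord {n d : ℕ} {F : Type*} [Field F] (G : SimpleGraph (Fin n))
    (ord : ∀ v : Fin n, Fin d ≃ G.neighborSet v)
    (x : G.edgeSet → F) (v : Fin n) : Fin d → F :=
  fun i => x (edgeAt G v (ord v i))

/-- The Tanner code `C(H, C₀)`: assignments of symbols to the edges of `G` such that at
every vertex, the local word (in the given edge ordering) lies in the inner code `C₀`. -/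
def tannerCode {n d : ℕ} {F : Type*} [Field F] (G : SimpleGraph (Fin n))
    (ord : ∀ v : Fin n, Fin d ≃ G.neighborSet v)
    (C₀ : Submodule F (Fin d → F)) : Submodule F (G.edgeSet → F) where
  carrier := {x | ∀ v : Fin n, localWord G ord x v ∈ C₀}
  add_mem' := fun hx hy v => C₀.add_mem (hx v) (hy v)
  zero_mem' := fun _ => C₀.zero_mem
  smul_mem' := fun a _ hx v => C₀.smul_mem a (hx v)

section Aux
variable {n d : ℕ} {F : Type} [Field F]

lemma edgeAt_injective (G : SimpleGraph (Fin n)) (v : Fin n) :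
    Function.Injective (edgeAt G v) := by
  intro u u' h
  have h2 : s(v, (u : Fin n)) = s(v, (u' : Fin n)) := congrArg Subtype.val h
  exact Subtype.ext (Sym2.congr_right.mp h2)

lemma localWord_ne_of_mem_edge (G : SimpleGraph (Fin n))
    (ord : ∀ v : Fin n, Fin d ≃ G.neighborSet v) (x y : G.edgeSet → F)
    (e : G.edgeSet) (he : x e ≠ y e) (v : Fin n) (hv : v ∈ (e : Sym2 (Fin n))) :
    localWord G ord x v ≠ localWord G ord y v := by
  have hspec : s(v, Sym2.Mem.other hv) = (e : Sym2 (Fin n)) := Sym2.other_spec hv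
  have hadj : Sym2.Mem.other hv ∈ G.neighborSet v := by
    rw [SimpleGraph.mem_neighborSet, ← SimpleGraph.mem_edgeSet, hspec]
    exact e.2
  have hE : edgeAt G v ⟨Sym2.Mem.other hv, hadj⟩ = e := Subtype.ext hspec
  intro hloc
  apply he
  have := congrFun hloc ((ord v).symm ⟨Sym2.Mem.other hv, hadj⟩)
  simp only [localWord, Equiv.apply_symm_apply, hE] at this
  exact this

end Aux

/-- **Linear-time unique decoding of expander codes from erasures** (uniqueness part).
If the inner code `C₀ ⊆ F_q^d` has minimum distance greater than `δ₀·d` (equivalently, it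
can recover from any `δ₀·d` erasures), `H` is `d`-regular on `n` vertices with normalized
second eigenvalue at most `lam`, `k > 0`, and `lam < δ₀ − 2/k`, then (for any edge
orderings) any two codewords of the Tanner code `C(H, C₀)` that agree on all but at most
`(δ₀/k)·(nd/2)` edges are equal. -/
theorem tanner_unique_decoding_erasures
    {n d : ℕ} {F : Type} [Field F] [Fintype F] [DecidableEq F]
    (G : SimpleGraph (Fin n)) [DecidableRel G.Adj] (hreg : G.IsRegularOfDegree d)
    (lam δ₀ k : ℝ) (heig : NormSecondEigenvalueLE G d lam)
    (hk : 0 < k) (hlam : lam < δ₀ - 2 / k)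
    (C₀ : Submodule F (Fin d → F))
    (hdist : ∀ c ∈ C₀, ∀ c' ∈ C₀, c ≠ c' → δ₀ * d < (hammingDist c c' : ℝ))
    (ord : ∀ v : Fin n, Fin d ≃ G.neighborSet v)
    (x y : G.edgeSet → F)
    (hx : x ∈ tannerCode G ord C₀) (hy : y ∈ tannerCode G ord C₀)
    (hagree : (({e : G.edgeSet | x e ≠ y e}).ncard : ℝ) ≤ (δ₀ / k) * ((n : ℝ) * d / 2)) :
    x = y := by
  classical
  by_contra hne
  obtain ⟨e₀, he₀⟩ : ∃ e : G.edgeSet, x e ≠ y e := by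
    by_contra h; push_neg at h; exact hne (funext h)
  obtain ⟨a, b, hab, hval⟩ : ∃ a b : Fin n, G.Adj a b ∧ (e₀ : Sym2 (Fin n)) = s(a, b) := by
    obtain ⟨e, he⟩ := e₀
    induction e using Sym2.ind with
    | _ a b => exact ⟨a, b, G.mem_edgeSet.mp he, rfl⟩
  have hd : 0 < d := by
    rw [← hreg a]; exact (G.degree_pos_iff_exists_adj a).mpr ⟨b, hab⟩
  have hn : 0 < n := a.pos
  have hdR : (0 : ℝ) < d := by exact_mod_cast hd
  have hnR : (0 : ℝ) < n := by exact_mod_cast hn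
  -- lam * d is nonnegative
  have hlamd : 0 ≤ lam * d := by
    set x0 : Fin n → ℝ := fun w => (if w = a then 1 else 0) - (if w = b then 1 else 0) with hx0
    have hx0sum : ∑ v, x0 v = 0 := by
      simp [hx0, Finset.sum_sub_distrib]
    have hx0a : x0 a = 1 := by simp [hx0, hab.ne]
    have hpos : 0 < ∑ v, x0 v ^ 2 :=
      Finset.sum_pos' (fun i _ => sq_nonneg _) ⟨a, Finset.mem_univ a, by rw [hx0a]; norm_num⟩
    have h := heig x0 hx0sum
    have hsq : 0 < Real.sqrt (∑ v, x0 v ^ 2) := Real.sqrt_pos.mpr hpos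
    by_contra hneg
    push_neg at hneg
    have : lam * (d : ℝ) * Real.sqrt (∑ v, x0 v ^ 2) < 0 := mul_neg_of_neg_of_pos hneg hsq
    have h0 := Real.sqrt_nonneg (∑ v, ((G.adjMatrix ℝ).mulVec x0 v) ^ 2)
    linarith
  -- the bad edges and bad vertices
  set D' : Finset G.edgeSet := Finset.univ.filter (fun e => x e ≠ y e) with hD'
  set S : Finset (Fin n) :=
    Finset.univ.filter (fun v => localWord G ord x v ≠ localWord G ord y v) with hS
  have hDcard : ({e : G.edgeSet | x e ≠ y e}).ncard = D'.card := by
    rw [Set.ncard_eq_toFinset_card']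
    congr 1
    ext e
    simp [hD']
  have hE1 : (1 : ℝ) ≤ D'.card := by
    have : e₀ ∈ D' := by simp [hD', he₀]
    have := Finset.card_pos.mpr ⟨e₀, this⟩
    exact_mod_cast this
  rw [hDcard] at hagree
  have hδ : 0 < δ₀ := by
    by_contra h
    push_neg at h
    have h1 : δ₀ / k ≤ 0 := div_nonpos_of_nonpos_of_nonneg h hk.le
    have h2 : (0 : ℝ) ≤ (n : ℝ) * d / 2 := by positivity
    nlinarith
  -- membership of endpoints of bad edges in S
  have hmemS : ∀ (e : G.edgeSet), x e ≠ y e → ∀ v : Fin n, v ∈ (e : Sym2 (Fin n)) → v ∈ S := by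
    intro e he v hv
    simp only [hS, Finset.mem_filter, Finset.mem_univ, true_and]
    exact localWord_ne_of_mem_edge G ord x y e he v hv
  have hSne : S.Nonempty := ⟨a, hmemS e₀ he₀ a (by rw [hval]; exact Sym2.mem_mk_left a b)⟩
  obtain ⟨s, hs⟩ : ∃ s : ℝ, s = (S.card : ℝ) := ⟨_, rfl⟩
  have hspos : 0 < s := by
    simp only [hs]
    exact_mod_cast Finset.card_pos.mpr hSne
  -- bad incidences at a vertex
  set bad : Fin n → Finset (Fin d) := fun v =>
    Finset.univ.filter (fun i => x (edgeAt G v (ord v i)) ≠ y (edgeAt G v (ord v i))) with hbad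
  -- (a): each bad vertex has many bad incidences
  have ha : ∀ v ∈ S, δ₀ * d < ((bad v).card : ℝ) := by
    intro v hv
    have hvne : localWord G ord x v ≠ localWord G ord y v := by
      simpa [hS] using hv
    have h1 := hdist _ (hx v) _ (hy v) hvne
    have h2 : hammingDist (localWord G ord x v) (localWord G ord y v) = (bad v).card := by
      simp only [hammingDist, hbad, localWord]
      congr 1
    rwa [h2] at h1
  have hsum_a : δ₀ * d * s < ∑ v ∈ S, ((bad v).card : ℝ) := by
    have h := Finset.sum_lt_sum_of_nonempty hSne ha
    calc δ₀ * d * s = ∑ _v ∈ S, δ₀ * d := by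
          rw [Finset.sum_const, nsmul_eq_mul, hs]; ring
      _ < _ := h
  -- (b): double counting, total bad incidences ≤ 2 * number of bad edges
  have hb : ∑ v ∈ S, (bad v).card ≤ 2 * D'.card := by
    have hsig : ∑ v ∈ S, (bad v).card = (S.sigma bad).card := (Finset.card_sigma S bad).symm
    set T : Finset (G.edgeSet × Fin n) :=
      (D' ×ˢ Finset.univ).filter (fun q => q.2 ∈ (q.1 : Sym2 (Fin n))) with hT
    have h1 : (S.sigma bad).card ≤ T.card := by
      apply Finset.card_le_card_of_injOn (fun p => (edgeAt G p.1 (ord p.1 p.2), p.1))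
      · intro p hp
        rw [Finset.mem_coe, Finset.mem_sigma] at hp
        obtain ⟨hp1, hp2⟩ := hp
        simp only [hbad, Finset.mem_filter, Finset.mem_univ, true_and] at hp2
        simp only [hT, Finset.mem_coe, Finset.mem_filter, Finset.mem_product, Finset.mem_univ, and_true,
          true_and]
        refine ⟨?_, ?_⟩
        · simp only [hD', Finset.mem_filter, Finset.mem_univ, true_and]
          exact hp2
        · exact Sym2.mem_mk_left _ _
      · intro p hp q hq hpq
        obtain ⟨pv, pi⟩ := p
        obtain ⟨qv, qi⟩ := q
        have hvv : pv = qv := congrArg Prod.snd hpq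
        subst hvv
        have hedge : edgeAt G pv (ord pv pi) = edgeAt G pv (ord pv qi) :=
          congrArg Prod.fst hpq
        have : pi = qi := (ord pv).injective (edgeAt_injective G pv hedge)
        subst this
        rfl
    have h2 : T.card ≤ 2 * D'.card := by
      have hfib : ∀ q ∈ T, q.1 ∈ D' := by
        intro q hq
        exact (Finset.mem_product.mp (Finset.mem_filter.mp hq).1).1
      rw [Finset.card_eq_sum_card_fiberwise hfib]
      have hbound : ∀ e ∈ D', (T.filter (fun q => q.1 = e)).card ≤ 2 := by
        intro e _
        have hcard2 : (Finset.univ.filter (fun v : Fin n => v ∈ (e : Sym2 (Fin n)))).card ≤ 2 := by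
          obtain ⟨e, -⟩ := e
          induction e using Sym2.ind with
          | _ a b =>
            have hsub : Finset.univ.filter (fun v : Fin n => v ∈ (s(a, b) : Sym2 (Fin n)))
                ⊆ {a, b} := by
              intro v hv
              simp only [Finset.mem_filter, Sym2.mem_iff] at hv
              simp [hv.2]
            exact (Finset.card_le_card hsub).trans
              ((Finset.card_insert_le a {b}).trans (by simp))
        refine le_trans (Finset.card_le_card_of_injOn (fun q => q.2) ?_ ?_) hcard2
        · intro q hq
          rw [Finset.mem_coe, Finset.mem_filter] at hq
          obtain ⟨hq1, hq2⟩ := hq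
          rw [hT, Finset.mem_filter] at hq1
          simp only [Finset.mem_coe, Finset.mem_filter, Finset.mem_univ, true_and]
          exact hq2 ▸ hq1.2
        · intro q hq q' hq' hqq
          have h1 := (Finset.mem_filter.mp hq).2
          have h1' := (Finset.mem_filter.mp hq').2
          exact Prod.ext (h1.trans h1'.symm) hqq
      calc ∑ e ∈ D', (T.filter fun q => q.1 = e).card ≤ ∑ e ∈ D', 2 :=
            Finset.sum_le_sum hbound
        _ = 2 * D'.card := by rw [Finset.sum_const, smul_eq_mul, mul_comm]
    rw [hsig]
    exact h1.trans h2
  -- (c): bad incidences at v ≤ neighbors of v in S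
  have hc : ∀ v ∈ S, (bad v).card ≤ ((G.neighborFinset v).filter (· ∈ S)).card := by
    intro v _
    apply Finset.card_le_card_of_injOn (fun i => ((ord v i : G.neighborSet v) : Fin n))
    · intro i hi
      simp only [hbad, Finset.mem_coe, Finset.mem_filter, Finset.mem_univ, true_and] at hi
      refine Finset.mem_filter.mpr ⟨?_, ?_⟩
      · exact (G.mem_neighborFinset v _).mpr (ord v i).2
      · exact hmemS _ hi _ (Sym2.mem_mk_right v _)
    · intro i _ j _ hij
      exact (ord v).injective (Subtype.ext hij)
  -- spectral bound
  set g : Fin n → ℝ := fun u => if u ∈ S then 1 else 0 with hg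
  have hgsum : ∑ v, g v = s := by
    simp [hg, hs]
  set c : Fin n → ℝ := fun _ => s / n with hcdef
  set f : Fin n → ℝ := g - c with hf
  have hfsum : ∑ v, f v = 0 := by
    simp only [hf, Pi.sub_apply, Finset.sum_sub_distrib, hgsum, hcdef]
    rw [Finset.sum_const, Finset.card_univ, Fintype.card_fin, nsmul_eq_mul]
    field_simp
    ring
  have hAg : ∀ v, (G.adjMatrix ℝ).mulVec g v
      = (((G.neighborFinset v).filter (· ∈ S)).card : ℝ) := by
    intro v
    rw [SimpleGraph.adjMatrix_mulVec_apply]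
    simp [hg, Finset.filter_mem_eq_inter]
  have hAc : ∀ v, (G.adjMatrix ℝ).mulVec c v = d * (s / n) := by
    intro v
    rw [SimpleGraph.adjMatrix_mulVec_apply]
    have hcard : (G.neighborFinset v).card = d := hreg v
    simp only [hcdef]
    rw [Finset.sum_const, hcard, nsmul_eq_mul]
  have hAf : ∀ v, (G.adjMatrix ℝ).mulVec f v
      = (G.adjMatrix ℝ).mulVec g v - d * (s / n) := by
    intro v
    rw [hf, Matrix.mulVec_sub]
    simp [hAc v]
  -- sum of squares of f
  have hfsq : ∑ v, f v ^ 2 ≤ s := by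
    have hgsq : ∑ v, g v ^ 2 = s := by
      simp [hg, hs, ← Finset.sum_filter, sq]
    have hexp : ∀ u, f u ^ 2 = g u ^ 2 - 2 * (s / n) * g u + (s / n) ^ 2 := by
      intro u; simp only [hf, Pi.sub_apply, hcdef]; ring
    rw [Finset.sum_congr rfl (fun u _ => hexp u)]
    rw [Finset.sum_add_distrib, Finset.sum_sub_distrib, hgsq, ← Finset.mul_sum, hgsum,
      Finset.sum_const, Finset.card_univ, Fintype.card_fin, nsmul_eq_mul]
    have h1 : (n : ℝ) * (s / n) ^ 2 = s * (s / n) := by field_simp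
    have h2 : 0 ≤ s * (s / n) := by positivity
    nlinarith
  -- Cauchy-Schwarz + eigenvalue bound
  have hspec : ∑ v ∈ S, (G.adjMatrix ℝ).mulVec f v ≤ lam * d * s := by
    have c1 : (∑ v ∈ S, (G.adjMatrix ℝ).mulVec f v) ^ 2
        ≤ s * ∑ v ∈ S, ((G.adjMatrix ℝ).mulVec f v) ^ 2 := by
      have h := Finset.sum_mul_sq_le_sq_mul_sq S (fun _ => 1) ((G.adjMatrix ℝ).mulVec f)
      simpa [hs] using h
    have c2 : ∑ v ∈ S, ((G.adjMatrix ℝ).mulVec f v) ^ 2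
        ≤ ∑ v, ((G.adjMatrix ℝ).mulVec f v) ^ 2 :=
      Finset.sum_le_sum_of_subset_of_nonneg (Finset.subset_univ S)
        (fun i _ _ => sq_nonneg _)
    have c4 := heig f hfsum
    calc ∑ v ∈ S, (G.adjMatrix ℝ).mulVec f v
        ≤ Real.sqrt ((∑ v ∈ S, (G.adjMatrix ℝ).mulVec f v) ^ 2) := by
          rw [Real.sqrt_sq_eq_abs]; exact le_abs_self _
      _ ≤ Real.sqrt (s * ∑ v ∈ S, ((G.adjMatrix ℝ).mulVec f v) ^ 2) := Real.sqrt_le_sqrt c1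
      _ = Real.sqrt s * Real.sqrt (∑ v ∈ S, ((G.adjMatrix ℝ).mulVec f v) ^ 2) :=
          Real.sqrt_mul hspos.le _
      _ ≤ Real.sqrt s * Real.sqrt (∑ v, ((G.adjMatrix ℝ).mulVec f v) ^ 2) := by
          exact mul_le_mul_of_nonneg_left (Real.sqrt_le_sqrt c2) (Real.sqrt_nonneg _)
      _ ≤ Real.sqrt s * (lam * d * Real.sqrt (∑ v, f v ^ 2)) := by
          exact mul_le_mul_of_nonneg_left c4 (Real.sqrt_nonneg _)
      _ ≤ Real.sqrt s * (lam * d * Real.sqrt s) := by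
          exact mul_le_mul_of_nonneg_left
            (mul_le_mul_of_nonneg_left (Real.sqrt_le_sqrt hfsq) hlamd) (Real.sqrt_nonneg _)
      _ = lam * d * s := by
          rw [show Real.sqrt s * (lam * ↑d * Real.sqrt s)
            = lam * ↑d * (Real.sqrt s * Real.sqrt s) by ring,
            Real.mul_self_sqrt hspos.le]
  -- combine spectral side
  have hmain : δ₀ * d * s < lam * d * s + d * (s / n) * s := by
    have step1 : ∑ v ∈ S, ((bad v).card : ℝ)
        ≤ ∑ v ∈ S, (G.adjMatrix ℝ).mulVec g v := by
      apply Finset.sum_le_sum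
      intro v hv
      rw [hAg v]
      exact_mod_cast hc v hv
    have step2 : ∑ v ∈ S, (G.adjMatrix ℝ).mulVec g v
        = ∑ v ∈ S, (G.adjMatrix ℝ).mulVec f v + s * (d * (s / n)) := by
      have : ∀ v ∈ S, (G.adjMatrix ℝ).mulVec g v
          = (G.adjMatrix ℝ).mulVec f v + d * (s / n) := by
        intro v _; rw [hAf v]; ring
      rw [Finset.sum_congr rfl this, Finset.sum_add_distrib, Finset.sum_const, nsmul_eq_mul, ← hs]
    have := hsum_a.trans_le (step1.trans_eq step2)
    nlinarith [hspec]
  -- counting side : s < n / k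
  have hslt : s < (n : ℝ) / k := by
    have hbR : ∑ v ∈ S, ((bad v).card : ℝ) ≤ 2 * D'.card := by
      exact_mod_cast hb
    have h1 : δ₀ * d * s < 2 * ((δ₀ / k) * ((n : ℝ) * d / 2)) := by
      calc δ₀ * d * s < ∑ v ∈ S, ((bad v).card : ℝ) := hsum_a
        _ ≤ 2 * D'.card := hbR
        _ ≤ 2 * ((δ₀ / k) * ((n : ℝ) * d / 2)) := by linarith
    have h2 : 2 * ((δ₀ / k) * ((n : ℝ) * d / 2)) = δ₀ * d * ((n : ℝ) / k) := by
      field_simp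
    rw [h2] at h1
    have hpos : 0 < δ₀ * (d : ℝ) := by positivity
    exact lt_of_mul_lt_mul_left h1 hpos.le
  -- final contradiction
  have hδlt : δ₀ < lam + s / n := by
    have hds : 0 < (d : ℝ) * s := by positivity
    have key : δ₀ * ((d : ℝ) * s) < (lam + s / n) * ((d : ℝ) * s) := by
      calc δ₀ * ((d : ℝ) * s) = δ₀ * d * s := by ring
        _ < lam * d * s + d * (s / n) * s := hmain
        _ = (lam + s / n) * ((d : ℝ) * s) := by ring
    exact lt_of_mul_lt_mul_right key hds.le
  have hsn : s / n < 1 / k := by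
    rw [div_lt_div_iff₀ hnR hk]
    have := (lt_div_iff₀ hk).mp hslt
    linarith
  have h2k : 2 / k = 2 * (1 / k) := by ring
  have hkpos : (0 : ℝ) < 1 / k := by positivity
  rw [h2k] at hlam
  linarith
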